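/- Updating one component via fetch-and-add is correct: if R = encode(v) and process i changes its component from v i to a new value x by adding posAdj − negAdj (where posAdj covers bits to set and negAdj covers bits to unset), then R + posAdj − negAdj = encode(v[i ↦ x]). -/

import Mathlib

/-- Interleaved encoding of `n` natural numbers into a single natural number:
bit `j` of component `i` is stored at bit position `j*n + i`. -/
def encode (n : ℕ) (v : Fin n → ℕ) : ℕ :=
  ∑ i : Fin n, ∑ j ∈ Finset.range (v i + 1),
    (Nat.testBit (v i) j).toNat * 2 ^ (j * n + (i : ℕ))

/-- Bits of the new value `x` that must be set (they are `1` in `x` and `0` in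
the old value `a`), contributing `2^(j*n+i)` each. -/
def posAdj (n : ℕ) (i : Fin n) (a x : ℕ) : ℕ :=
  ∑ j ∈ (Finset.range (x + 1)).filter
      (fun j => Nat.testBit x j = true ∧ Nat.testBit a j = false),
    2 ^ (j * n + (i : ℕ))

/-- Bits of the new value `x` that must be unset (they are `0` in `x` and `1` in
the old value `a`), contributing `2^(j*n+i)` each. -/
def negAdj (n : ℕ) (i : Fin n) (a x : ℕ) : ℕ :=
  ∑ j ∈ (Finset.range (a + 1)).filter
      (fun j => Nat.testBit x j = false ∧ Nat.testBit a j = true),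
    2 ^ (j * n + (i : ℕ))

private lemma testBit_false_of_ge {a j : ℕ} (h : a + 1 ≤ j) : Nat.testBit a j = false :=
  Nat.testBit_eq_false_of_lt ((Nat.lt_two_pow_self (n := a)).trans_le (Nat.pow_le_pow_right (by norm_num) (by omega)))

/-- Updating one component via fetch-and-add is correct. -/
theorem stmt_2 (n : ℕ) (hn : 1 ≤ n) (v : Fin n → ℕ) (i : Fin n) (x : ℕ) :
    (encode n v : ℤ) + (posAdj n i (v i) x : ℤ) - (negAdj n i (v i) x : ℤ)
      = (encode n (Function.update v i x) : ℤ) := by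
  classical
  set N := max (v i) x + 1 with hN
  -- extend a component sum to range N
  have key : ∀ a : ℕ, a + 1 ≤ N →
      (∑ j ∈ Finset.range (a+1), (Nat.testBit a j).toNat * 2 ^ (j*n+(i:ℕ)))
      = ∑ j ∈ Finset.range N, (Nat.testBit a j).toNat * 2 ^ (j*n+(i:ℕ)) := by
    intro a ha
    apply Finset.sum_subset (Finset.range_subset_range.2 ha)
    intro j _ hj'
    simp only [Finset.mem_range] at hj'
    rw [testBit_false_of_ge (by omega)]
    simp
  have hpos : posAdj n i (v i) x
      = ∑ j ∈ Finset.range N,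
          if Nat.testBit x j = true ∧ Nat.testBit (v i) j = false then 2 ^ (j*n+(i:ℕ)) else 0 := by
    rw [posAdj, Finset.sum_filter]
    apply Finset.sum_subset (Finset.range_subset_range.2 (by omega))
    intro j _ hj'
    simp only [Finset.mem_range] at hj'
    rw [testBit_false_of_ge (by omega)]
    simp
  have hneg : negAdj n i (v i) x
      = ∑ j ∈ Finset.range N,
          if Nat.testBit x j = false ∧ Nat.testBit (v i) j = true then 2 ^ (j*n+(i:ℕ)) else 0 := by
    rw [negAdj, Finset.sum_filter]
    apply Finset.sum_subset (Finset.range_subset_range.2 (by omega))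
    intro j _ hj'
    simp only [Finset.mem_range] at hj'
    rw [show (v i).testBit j = false from testBit_false_of_ge (by omega)]
    simp
  -- decompose encode
  have hdec : ∀ w : Fin n → ℕ, encode n w
      = (∑ i' ∈ Finset.univ.erase i, ∑ j ∈ Finset.range (w i' + 1),
          (Nat.testBit (w i') j).toNat * 2 ^ (j * n + (i' : ℕ)))
        + ∑ j ∈ Finset.range (w i + 1), (Nat.testBit (w i) j).toNat * 2 ^ (j * n + (i : ℕ)) := by
    intro w
    rw [encode, ← Finset.sum_erase_add _ _ (Finset.mem_univ i)]
  rw [hdec v, hdec (Function.update v i x)]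
  have herase : (∑ i' ∈ Finset.univ.erase i, ∑ j ∈ Finset.range (Function.update v i x i' + 1),
          (Nat.testBit (Function.update v i x i') j).toNat * 2 ^ (j * n + (i' : ℕ)))
      = ∑ i' ∈ Finset.univ.erase i, ∑ j ∈ Finset.range (v i' + 1),
          (Nat.testBit (v i') j).toNat * 2 ^ (j * n + (i' : ℕ)) := by
    apply Finset.sum_congr rfl
    intro i' hi'
    rw [Function.update_of_ne (Finset.ne_of_mem_erase hi')]
  rw [herase, Function.update_self, hpos, hneg, key (v i) (by omega), key x (by omega)]
  have hmain : (∑ j ∈ Finset.range N, (((v i).testBit j).toNat : ℤ) * 2 ^ (j*n+(i:ℕ)))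
      + (∑ j ∈ Finset.range N,
          if Nat.testBit x j = true ∧ Nat.testBit (v i) j = false then (2:ℤ) ^ (j*n+(i:ℕ)) else 0)
      - (∑ j ∈ Finset.range N,
          if Nat.testBit x j = false ∧ Nat.testBit (v i) j = true then (2:ℤ) ^ (j*n+(i:ℕ)) else 0)
      = ∑ j ∈ Finset.range N, ((Nat.testBit x j).toNat : ℤ) * 2 ^ (j*n+(i:ℕ)) := by
    rw [← Finset.sum_add_distrib, ← Finset.sum_sub_distrib]
    exact Finset.sum_congr rfl fun j _ => by
      cases hx : Nat.testBit x j <;> cases ha : Nat.testBit (v i) j <;> simp [hx, ha]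
  push_cast [apply_ite (Nat.cast : ℕ → ℤ)]
  push_cast [apply_ite (Nat.cast : ℕ → ℤ)] at hmain
  linarith [hmain]
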